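/- In the CP setting with n = ℓ, the two-stage greedy construction yields: if U ≥ s·k, s ≥ 1, s ≤ k, k ≤ n, then (U + s(n−k))/(U + (n−k)) ≤ n/(2√n − 1). -/
import Mathlib


/-- Two-stage greedy bound in the CP setting with `n = ℓ`: if `1 ≤ s ≤ k ≤ n` and
`U ≥ s·k`, then `(U + s(n−k))/(U + (n−k)) ≤ n/(2√n − 1)`. -/
theorem greedy_ratio_bound (U s k n : ℝ) (hs : 1 ≤ s) (hsk : s ≤ k) (hkn : k ≤ n)
    (hU : s * k ≤ U) :
    (U + s * (n - k)) / (U + (n - k)) ≤ n / (2 * Real.sqrt n - 1) := by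
  have hn : (1:ℝ) ≤ n := le_trans hs (hsk.trans hkn)
  set t := Real.sqrt n with ht
  have ht2 : t ^ 2 = n := Real.sq_sqrt (by linarith)
  have ht1 : 1 ≤ t := by nlinarith [Real.sqrt_nonneg n]
  have hnk : 0 ≤ n - k := by linarith
  have hsk1 : (1:ℝ) ≤ s * k := by nlinarith
  have hd1 : 0 < U + (n - k) := by nlinarith
  have hd2 : 0 < 2 * t - 1 := by linarith
  have hd3 : 0 < s * k + (n - k) := by nlinarith
  have step1 : (U + s * (n - k)) / (U + (n - k)) ≤
      (s * k + s * (n - k)) / (s * k + (n - k)) := by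
    rw [div_le_div_iff₀ hd1 hd3]
    nlinarith [mul_nonneg (mul_nonneg (sub_nonneg.2 hs) hnk) (sub_nonneg.2 hU)]
  have step2 : (s * k + s * (n - k)) / (s * k + (n - k)) ≤ n / (2 * t - 1) := by
    rw [div_le_div_iff₀ hd3 hd2]
    nlinarith [mul_nonneg (mul_nonneg (sub_nonneg.2 hs) hnk) (sub_nonneg.2 ht1),
      sq_nonneg (s - t), mul_nonneg (sub_nonneg.2 hsk) (sub_nonneg.2 hs),
      sq_nonneg (s - t), mul_nonneg (mul_nonneg (sub_nonneg.2 hsk) (sub_nonneg.2 hs)) hd2.le]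
  linarith
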